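/- Let T be a stopping time with respect to a filtration, valued in ℕ ∪ {∞}, and let γ > 0, k ≥ 1 be such that P{T ≥ s + k | T ≥ s} < 1 − k/γ for every s ≥ 1 with P{T ≥ s} > 0. Then E[T] < γ. -/

import Mathlib

open MeasureTheory ProbabilityTheory
open scoped ENNReal

theorem expectation_lt_of_cond_survival {Ω : Type*} [MeasurableSpace Ω]
    (P : Measure Ω) [IsProbabilityMeasure P]
    (𝓕 : Filtration ℕ ‹MeasurableSpace Ω›) (T : Ω → ℕ) (hT : IsStoppingTime 𝓕 (fun ω => (T ω : WithTop ℕ)))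
    (γ : ℝ) (hγ : 0 < γ) (k : ℕ) (hk : 1 ≤ k)
    (hcond : ∀ s : ℕ, 1 ≤ s → P {ω | s ≤ T ω} ≠ 0 →
      (P[|{ω | s ≤ T ω}] {ω | s + k ≤ T ω}).toReal < 1 - (k : ℝ) / γ) :
    ∫⁻ ω, (T ω : ℝ≥0∞) ∂P < ENNReal.ofReal γ := by
  classical
  have hmeas : ∀ s : ℕ, MeasurableSet {ω | s ≤ T ω} := fun s =>
    𝓕.le s _ (by simpa using hT.measurableSet_ge_of_countable s)
  set p : ℕ → ℝ≥0∞ := fun s => P {ω | s ≤ T ω} with hp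
  have hpne : ∀ s, p s ≠ ∞ := fun s => measure_ne_top P _
  have hpmono : ∀ s t : ℕ, s ≤ t → p t ≤ p s := by
    intro s t hst
    exact measure_mono (fun ω hω => le_trans hst hω)
  -- the lintegral as a tsum of survival probabilities
  have hlint : ∫⁻ ω, (T ω : ℝ≥0∞) ∂P = ∑' n : ℕ, p (n + 1) := by
    have hpt : ∀ ω, (T ω : ℝ≥0∞)
        = ∑' n : ℕ, Set.indicator {ω | n + 1 ≤ T ω} (fun _ => (1 : ℝ≥0∞)) ω := by
      intro ω
      have h1 : ∀ n : ℕ, Set.indicator {ω | n + 1 ≤ T ω} (fun _ => (1 : ℝ≥0∞)) ω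
          = if n < T ω then 1 else 0 := by
        intro n
        by_cases h : n + 1 ≤ T ω <;> simp only [Set.indicator_apply, Set.mem_setOf_eq, Nat.add_one_le_iff]
      rw [tsum_congr h1]
      have h2 := tsum_eq_sum (f := fun n : ℕ => if n < T ω then (1 : ℝ≥0∞) else 0)
        (L := SummationFilter.unconditional ℕ) (s := Finset.range (T ω))
        (fun n hn => by simp [Finset.mem_range] at hn; simp [Nat.not_lt.mpr hn])
      rw [h2, Finset.sum_congr rfl (fun n hn => if_pos (Finset.mem_range.mp hn))]
      simp
    calc ∫⁻ ω, (T ω : ℝ≥0∞) ∂P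
        = ∫⁻ ω, ∑' n : ℕ, Set.indicator {ω | n + 1 ≤ T ω} (fun _ => (1 : ℝ≥0∞)) ω ∂P := by
          exact lintegral_congr hpt
      _ = ∑' n : ℕ, ∫⁻ ω, Set.indicator {ω | n + 1 ≤ T ω} (fun _ => (1 : ℝ≥0∞)) ω ∂P := by
          exact lintegral_tsum fun n => (measurable_const.indicator (hmeas (n + 1))).aemeasurable
      _ = ∑' n : ℕ, p (n + 1) := by
          refine tsum_congr fun n => ?_
          exact lintegral_indicator_one (hmeas (n + 1))
  by_cases h1 : p 1 = 0
  · have hz : ∀ n : ℕ, p (n + 1) = 0 := fun n =>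
      le_antisymm (h1 ▸ hpmono 1 (n + 1) (by omega)) bot_le
    rw [hlint]
    simp only [hz, tsum_zero]
    exact ENNReal.ofReal_pos.mpr hγ
  -- real-valued survival probabilities
  set q : ℕ → ℝ := fun s => (p s).toReal with hq
  have hq0 : ∀ s, 0 ≤ q s := fun s => ENNReal.toReal_nonneg
  have hq1 : ∀ s, q s ≤ 1 := by
    intro s
    have : p s ≤ 1 := prob_le_one
    simpa [hq] using ENNReal.toReal_mono (by norm_num) this
  have hqmono : ∀ s t : ℕ, s ≤ t → q t ≤ q s := fun s t hst =>
    ENNReal.toReal_mono (hpne s) (hpmono s t hst)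
  set c : ℝ := 1 - (k : ℝ) / γ with hc
  -- conditional probability formula
  have hcondval : ∀ s : ℕ, p s ≠ 0 →
      (P[|{ω | s ≤ T ω}] {ω | s + k ≤ T ω}).toReal = (q s)⁻¹ * q (s + k) := by
    intro s hs
    have hsub : {ω | s + k ≤ T ω} ⊆ {ω | s ≤ T ω} := fun ω hω => le_trans (Nat.le_add_right s k) hω
    rw [cond_apply (hmeas s), Set.inter_eq_self_of_subset_right hsub]
    rw [ENNReal.toReal_mul, ENNReal.toReal_inv]
  have hq1pos : 0 < q 1 := by
    simp only [hq]
    exact ENNReal.toReal_pos h1 (hpne 1)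
  -- c is positive
  set c' : ℝ := (P[|{ω | 1 ≤ T ω}] {ω | 1 + k ≤ T ω}).toReal with hc'
  have hc'lt : c' < c := hcond 1 le_rfl h1
  have hc'0 : 0 ≤ c' := ENNReal.toReal_nonneg
  have hcpos : 0 < c := lt_of_le_of_lt hc'0 hc'lt
  have h1c : 1 - c = (k : ℝ) / γ := by ring
  have hkpos : (0 : ℝ) < k := by exact_mod_cast hk
  have h1cpos : 0 < 1 - c := by rw [h1c]; positivity
  -- key contraction inequality
  have hkey : ∀ s : ℕ, 1 ≤ s → q (s + k) ≤ c * q s := by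
    intro s hs
    by_cases hps : p s = 0
    · have : p (s + k) = 0 := le_antisymm (hps ▸ hpmono s (s + k) (by omega)) bot_le
      have : q (s + k) = 0 := by simp [hq, this]
      rw [this]
      positivity
    · have h := hcond s hs hps
      rw [hcondval s hps] at h
      have hqs : 0 < q s := ENNReal.toReal_pos hps (hpne s)
      have := (inv_mul_le_iff₀ hqs).mp h.le
      linarith [this, mul_comm (q s) c]
  -- exact value at s = 1
  have hq1k : q (1 + k) = c' * q 1 := by
    rw [hc', hcondval 1 h1]
    field_simp
  -- partial sums are bounded by γ
  set S : ℕ → ℝ := fun N => ∑ n ∈ Finset.range N, q (n + 1) with hS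
  have hSbound : ∀ N, S N ≤ γ := by
    intro N
    have hmono : S N ≤ S (N + k) := by
      apply Finset.sum_le_sum_of_subset_of_nonneg
      · exact Finset.range_subset_range.mpr (by omega)
      · intro i _ _; exact hq0 _
    have hstep : S (N + k) ≤ k + c * S N := by
      have : S (N + k) = (∑ n ∈ Finset.range k, q (n + 1))
          + ∑ n ∈ Finset.range N, q (k + n + 1) := by
        show (∑ n ∈ Finset.range (N + k), q (n + 1)) = _
        rw [show N + k = k + N by omega, Finset.sum_range_add]
      rw [this]
      have hA : (∑ n ∈ Finset.range k, q (n + 1)) ≤ k := by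
        calc (∑ n ∈ Finset.range k, q (n + 1)) ≤ ∑ n ∈ Finset.range k, (1 : ℝ) :=
              Finset.sum_le_sum fun n _ => hq1 _
          _ = k := by simp
      have hB : (∑ n ∈ Finset.range N, q (k + n + 1)) ≤ c * S N := by
        rw [hS, Finset.mul_sum]
        refine Finset.sum_le_sum fun n _ => ?_
        have := hkey (n + 1) (by omega)
        calc q (k + n + 1) = q (n + 1 + k) := by ring_nf
          _ ≤ c * q (n + 1) := this
      linarith
    have hmm : S N * (1 - c) ≤ k := by nlinarith
    rw [h1c, ← mul_div_assoc] at hmm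
    have := (div_le_iff₀ hγ).mp hmm
    nlinarith
  have hsum : Summable (fun n => q (n + 1)) :=
    summable_of_sum_range_le (fun n => hq0 _) hSbound
  set Sinf : ℝ := ∑' n, q (n + 1) with hSinf
  have hSinfle : Sinf ≤ γ := Summable.tsum_le_of_sum_range_le hsum hSbound
  -- split off the first k terms
  have hsum2 : Summable (fun n => q (n + 2)) := by
    have := (summable_nat_add_iff 1).mpr hsum
    simpa using this
  have hsumk : Summable (fun n => q (n + k + 1)) := by
    have := (summable_nat_add_iff k).mpr hsum
    simpa using this
  have hsplit : (∑ n ∈ Finset.range k, q (n + 1)) + ∑' n, q (n + k + 1) = Sinf := by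
    rw [hSinf]
    exact Summable.sum_add_tsum_nat_add k hsum
  have htail0 : Sinf = q 1 + ∑' n, q (n + 2) := by
    rw [hSinf, Summable.tsum_eq_zero_add hsum]
  have hsumk2 : Summable (fun n => q (n + 1 + k + 1)) := by
    have := (summable_nat_add_iff 1).mpr hsumk
    simpa using this
  have htailsplit : ∑' n, q (n + k + 1) = q (k + 1) + ∑' n, q (n + 1 + k + 1) := by
    rw [Summable.tsum_eq_zero_add hsumk]
    norm_num
  have htailbound : ∑' n, q (n + 1 + k + 1) ≤ c * ∑' n, q (n + 2) := by
    rw [← tsum_mul_left]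
    refine Summable.tsum_le_tsum (fun n => ?_) hsumk2 (hsum2.mul_left c)
    have := hkey (n + 2) (by omega)
    calc q (n + 1 + k + 1) = q (n + 2 + k) := by ring_nf
      _ ≤ c * q (n + 2) := this
  -- combine with the strict inequality at s = 1
  have hStrict : Sinf < γ := by
    have e1 : q (k + 1) = c' * q 1 := by rw [← hq1k]; ring_nf
    have hT2 : ∑' n, q (n + 2) = Sinf - q 1 := by linarith [htail0]
    have : Sinf ≤ (k : ℝ) + c' * q 1 + c * (Sinf - q 1) := by
      have hA : (∑ n ∈ Finset.range k, q (n + 1)) ≤ k := by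
        calc (∑ n ∈ Finset.range k, q (n + 1)) ≤ ∑ n ∈ Finset.range k, (1 : ℝ) :=
              Finset.sum_le_sum fun n _ => hq1 _
          _ = k := by simp
      have := htailbound
      rw [hT2] at this
      nlinarith [hsplit, htailsplit, e1]
    have hstrict2 : Sinf * (1 - c) < k := by nlinarith [mul_pos (sub_pos.mpr hc'lt) hq1pos]
    rw [h1c, ← mul_div_assoc] at hstrict2
    have := (div_lt_iff₀ hγ).mp hstrict2
    nlinarith
  -- back to ℝ≥0∞
  rw [hlint]
  have hconv : ∑' n : ℕ, p (n + 1) = ENNReal.ofReal Sinf := by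
    rw [hSinf, ENNReal.ofReal_tsum_of_nonneg (fun n => hq0 _) hsum]
    refine tsum_congr fun n => ?_
    rw [hq]
    exact (ENNReal.ofReal_toReal (hpne (n + 1))).symm
  rw [hconv]
  exact (ENNReal.ofReal_lt_ofReal_iff hγ).mpr hStrict
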